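/- Let (X,K) be a compact Hausdorff space with a similarity kernel. Then the map μ ↦ Kμ, from the space of Radon probability measures on X (with the weak* topology) to C(X) (with the uniform norm), is continuous. -/
import Mathlib

open MeasureTheory
open scoped BoundedContinuousFunction


private lemma stmt6_aux_dist_integral {X : Type*} [TopologicalSpace X]
    [MeasurableSpace X] [OpensMeasurableSpace X]
    (μ : Measure X) [IsProbabilityMeasure μ] (f g : X →ᵇ ℝ) :
    |(∫ y, f y ∂μ) - ∫ y, g y ∂μ| ≤ dist f g := by
  rw [← integral_sub (f.integrable μ) (g.integrable μ)]
  calc |∫ y, (f y - g y) ∂μ| = ‖∫ y, ((f - g) y) ∂μ‖ := by simp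
    _ ≤ ‖f - g‖ := (f - g).norm_integral_le_norm μ
    _ = dist f g := by rw [dist_eq_norm]

/-- the map `μ ↦ Kμ` from the space of Radon probability measures on a
compact Hausdorff space `X` (weak* topology) to `C(X)` (uniform norm) is continuous.
Formally: there is a continuous map `F : P(X) → C(X)` with `F μ x = ∫ K(x,y) dμ(y)`. -/
theorem stmt6 {X : Type*} [TopologicalSpace X] [CompactSpace X] [T2Space X]
    [MeasurableSpace X] [BorelSpace X]
    (K : X → X → ℝ) (hKc : Continuous fun p : X × X => K p.1 p.2)
    (hKnn : ∀ x y, 0 ≤ K x y) (hKd : ∀ x, 0 < K x x) :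
    ∃ F : ProbabilityMeasure X → C(X, ℝ), Continuous F ∧
      ∀ (μ : ProbabilityMeasure X) (x : X), F μ x = ∫ y, K x y ∂(μ : Measure X) := by
  classical
  -- the curried kernel
  set kc : C(X, C(X, ℝ)) := ContinuousMap.curry ⟨fun p : X × X => K p.1 p.2, hKc⟩ with hkc
  set k : X → (X →ᵇ ℝ) := fun x => BoundedContinuousFunction.mkOfCompact (kc x) with hk
  have hk_cont : Continuous k := by
    exact ((Isometry.of_dist_eq (fun f g =>
      BoundedContinuousFunction.dist_mkOfCompact f g)).continuous).comp kc.continuous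
  have hkxy : ∀ x y, k x y = K x y := fun x y => rfl
  -- the map F μ, as a continuous function of x for fixed μ
  have hFcont : ∀ μ : ProbabilityMeasure X, Continuous fun x => ∫ y, K x y ∂(μ : Measure X) := by
    intro μ
    have : LipschitzWith 1 (fun f : X →ᵇ ℝ => ∫ y, f y ∂(μ : Measure X)) := by
      intro f g
      rw [edist_dist, edist_dist, ENNReal.coe_one, one_mul, ENNReal.ofReal_le_ofReal_iff
        dist_nonneg, Real.dist_eq]
      exact stmt6_aux_dist_integral (μ : Measure X) f g
    exact this.continuous.comp hk_cont
  refine ⟨fun μ => ⟨fun x => ∫ y, K x y ∂(μ : Measure X), hFcont μ⟩, ?_, fun μ x => rfl⟩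
  rw [continuous_iff_continuousAt]
  intro μ₀
  rw [ContinuousAt, Metric.tendsto_nhds]
  intro ε hε
  -- cover the compact image of k by finitely many ε/4-balls
  have hcomp : IsCompact (Set.range k) := Set.image_univ ▸ isCompact_univ.image hk_cont
  obtain ⟨t, hts, htf, htcov⟩ := hcomp.finite_cover_balls (show (0:ℝ) < ε/4 by linarith)
  -- eventually all integrals against functions in t are close
  have hev : ∀ᶠ μ : ProbabilityMeasure X in nhds μ₀, ∀ g ∈ t,
      |(∫ y, g y ∂(μ : Measure X)) - ∫ y, g y ∂(μ₀ : Measure X)| < ε/4 := by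
    rw [Filter.eventually_all_finite htf]
    intro g hg
    have := ProbabilityMeasure.tendsto_iff_forall_integral_tendsto.mp
      (Filter.tendsto_id (x := nhds μ₀)) g
    have := Metric.tendsto_nhds.mp this (ε/4) (by linarith)
    filter_upwards [this] with μ hμ
    rwa [Real.dist_eq] at hμ
  filter_upwards [hev] with μ hμ
  rw [ContinuousMap.dist_lt_iff hε]
  intro x
  obtain ⟨g, hg, hgx⟩ := Set.mem_iUnion₂.mp (htcov (Set.mem_range_self x))
  rw [Metric.mem_ball] at hgx
  have h1 : |(∫ y, K x y ∂(μ : Measure X)) - ∫ y, g y ∂(μ : Measure X)| ≤ dist (k x) g := by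
    simpa [hkxy] using stmt6_aux_dist_integral (μ : Measure X) (k x) g
  have h2 : |(∫ y, g y ∂(μ₀ : Measure X)) - ∫ y, K x y ∂(μ₀ : Measure X)| ≤ dist (k x) g := by
    rw [abs_sub_comm]
    simpa [hkxy] using stmt6_aux_dist_integral (μ₀ : Measure X) (k x) g
  have h3 := hμ g hg
  simp only [ContinuousMap.coe_mk, Real.dist_eq]
  calc |(∫ y, K x y ∂(μ : Measure X)) - ∫ y, K x y ∂(μ₀ : Measure X)|
      ≤ |(∫ y, K x y ∂(μ : Measure X)) - ∫ y, g y ∂(μ : Measure X)|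
        + |(∫ y, g y ∂(μ : Measure X)) - ∫ y, g y ∂(μ₀ : Measure X)|
        + |(∫ y, g y ∂(μ₀ : Measure X)) - ∫ y, K x y ∂(μ₀ : Measure X)| := by
        have := abs_sub_le (∫ y, K x y ∂(μ : Measure X)) (∫ y, g y ∂(μ : Measure X))
          (∫ y, K x y ∂(μ₀ : Measure X))
        have := abs_sub_le (∫ y, g y ∂(μ : Measure X)) (∫ y, g y ∂(μ₀ : Measure X))
          (∫ y, K x y ∂(μ₀ : Measure X))
        linarith [abs_sub_le (∫ y, K x y ∂(μ : Measure X)) (∫ y, g y ∂(μ : Measure X))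
          (∫ y, K x y ∂(μ₀ : Measure X)), abs_sub_le (∫ y, g y ∂(μ : Measure X))
          (∫ y, g y ∂(μ₀ : Measure X)) (∫ y, K x y ∂(μ₀ : Measure X))]
    _ < ε/4 + ε/4 + ε/4 := by
        have := hgx
        have := h1; have := h2; linarith
    _ < ε := by linarith
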